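/- Let h ≥ 1, n = 2^h, u ∈ (0,1), and let x_1, …, x_n be real numbers. Define the exact partial sums s_{0,i} = x_i and s_{j,i} = s_{j−1,2i−1} + s_{j−1,2i} for 1 ≤ j ≤ h, 1 ≤ i ≤ 2^{h−j}, and assume s_{j,i} ≠ 0 for all such j, i; write s = s_{h,1} = Σ_{i=1}^n x_i. Let (δ_t)_{t=1}^{n−1} be random variables with |δ_t| ≤ u almost surely and E[δ_t | δ_1, …, δ_{t−1}] = 0 almost surely, and define the computed pairwise sums ŝ_{0,i} = x_i and ŝ_{j,i} = (ŝ_{j−1,2i−1} + ŝ_{j−1,2i})·(1 + δ_{t(j,i)}) where t(j,i) = (n − 2^{h−j+1}) + i enumerates the additions level by level; set ẑ = ŝ_{h,1} and K = (Σ_{i=1}^n |x_i|)/|s|. Then for every λ ∈ (0,1), with probability at least 1 − λ, |ẑ − s|/|s| ≤ K·√(u·γ_{2h}(u))·√(ln(2/λ)). -/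

import Mathlib

open MeasureTheory

private lemma cosh_le_exp_abs' (y : ℝ) : Real.cosh y ≤ Real.exp |y| := by
  rw [Real.cosh_eq]
  have h1 : Real.exp y ≤ Real.exp |y| := Real.exp_le_exp.2 (le_abs_self y)
  have h2 : Real.exp (-y) ≤ Real.exp |y| := Real.exp_le_exp.2 (neg_le_abs y)
  linarith

private lemma abs_sinh_le_exp_abs' (y : ℝ) : |Real.sinh y| ≤ Real.exp |y| := by
  have h1 : Real.exp y ≤ Real.exp |y| := Real.exp_le_exp.2 (le_abs_self y)
  have h2 : Real.exp (-y) ≤ Real.exp |y| := Real.exp_le_exp.2 (neg_le_abs y)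
  have h3 : 0 < Real.exp y := Real.exp_pos _
  have h4 : 0 < Real.exp (-y) := Real.exp_pos _
  rw [Real.sinh_eq, abs_div, abs_two, div_le_iff₀ (by norm_num : (0:ℝ) < 2)]
  refine abs_le.2 ⟨by linarith, by linarith⟩

private lemma exp_mul_le_convex' {a d u : ℝ} (hu : 0 < u) (hd : |d| ≤ u) :
    Real.exp (a * d) ≤ Real.cosh (a * u) + Real.sinh (a * u) * (d / u) := by
  obtain ⟨hd1, hd2⟩ := abs_le.1 hd
  have key := convexOn_exp.2 (Set.mem_univ (-(a*u))) (Set.mem_univ (a*u))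
    (show (0:ℝ) ≤ (u - d)/(2*u) from div_nonneg (by linarith) (by linarith))
    (show (0:ℝ) ≤ (u + d)/(2*u) from div_nonneg (by linarith) (by linarith))
    (show (u - d)/(2*u) + (u + d)/(2*u) = 1 by field_simp; ring)
  simp only [smul_eq_mul] at key
  have harg : (u - d)/(2*u) * (-(a*u)) + (u + d)/(2*u) * (a*u) = a * d := by
    field_simp; ring
  rw [harg] at key
  refine key.trans (le_of_eq ?_)
  rw [Real.cosh_eq, Real.sinh_eq]
  field_simp
  ring

private lemma sum_range_two_mul' (f : ℕ → ℝ) (M : ℕ) :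
    ∑ k ∈ Finset.range (2*M), f k = ∑ i ∈ Finset.range M, (f (2*i) + f (2*i+1)) := by
  induction M with
  | zero => simp
  | succ M ih =>
      rw [Finset.sum_range_succ, ← ih, show 2*(M+1) = (2*M+1)+1 by ring,
        Finset.sum_range_succ, Finset.sum_range_succ]
      ring

private lemma sum_blocks' (f : ℕ → ℝ) (c M : ℕ) :
    ∑ i ∈ Finset.range M, ∑ k ∈ Finset.Ico (i*c) ((i+1)*c), f k
      = ∑ k ∈ Finset.Ico 0 (M*c), f k := by
  induction M with
  | zero => simp
  | succ M ih =>
      rw [Finset.sum_range_succ, ih, Finset.sum_Ico_consecutive]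
      exacts [Nat.zero_le _, Nat.mul_le_mul_right _ (Nat.le_succ _)]

private lemma integrable_of_abs_bound {Ω : Type*} {m0 : MeasurableSpace Ω} {μ : Measure Ω}
    [IsFiniteMeasure μ] {f : Ω → ℝ} (hf : AEStronglyMeasurable f μ) {C : ℝ}
    (hC : ∀ᵐ ω ∂μ, |f ω| ≤ C) : Integrable f μ :=
  (integrable_const C).mono' hf (by simpa [Real.norm_eq_abs] using hC)

private lemma mgf_step {Ω : Type*} {m0 : MeasurableSpace Ω} (μ : Measure Ω)
    [IsProbabilityMeasure μ] {m : MeasurableSpace Ω} (hm : m ≤ m0) {W A d : Ω → ℝ} {u c B : ℝ}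
    (hu : 0 < u) (hc : 0 ≤ c)
    (hW : Measurable[m] W) (hWb : ∀ᵐ ω ∂μ, |W ω| ≤ B)
    (hA : Measurable[m] A) (hAb : ∀ᵐ ω ∂μ, |A ω| ≤ c)
    (hd : Measurable[m0] d) (hdb : ∀ᵐ ω ∂μ, |d ω| ≤ u)
    (hmean : μ[d | m] =ᵐ[μ] 0) :
    ∫ ω, Real.exp (W ω + A ω * d ω) ∂μ
      ≤ Real.exp (c^2 * u^2 / 2) * ∫ ω, Real.exp (W ω) ∂μ := by
  have hWm : Measurable[m0] W := hW.mono hm le_rfl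
  have hAm : Measurable[m0] A := hA.mono hm le_rfl
  -- integrability facts
  have hexpW_int : Integrable (fun ω => Real.exp (W ω)) μ := by
    refine integrable_of_abs_bound hWm.exp.aestronglyMeasurable (C := Real.exp B) ?_
    filter_upwards [hWb] with ω hω
    rw [abs_of_pos (Real.exp_pos _)]
    exact Real.exp_le_exp.2 ((le_abs_self _).trans hω)
  have hLHS_int : Integrable (fun ω => Real.exp (W ω + A ω * d ω)) μ := by
    refine integrable_of_abs_bound (hWm.add (hAm.mul hd)).exp.aestronglyMeasurable
      (C := Real.exp (B + c * u)) ?_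
    filter_upwards [hWb, hAb, hdb] with ω h1 h2 h3
    rw [abs_of_pos (Real.exp_pos _)]
    refine Real.exp_le_exp.2 (add_le_add ((le_abs_self _).trans h1) ?_)
    calc A ω * d ω ≤ |A ω * d ω| := le_abs_self _
    _ = |A ω| * |d ω| := abs_mul _ _
    _ ≤ c * u := mul_le_mul h2 h3 (abs_nonneg _) hc
  have hg1_int : Integrable (fun ω => Real.exp (W ω) * Real.cosh (A ω * u)) μ := by
    refine integrable_of_abs_bound
      (hWm.exp.mul (hAm.mul measurable_const).cosh).aestronglyMeasurable
      (C := Real.exp B * Real.exp (c*u)) ?_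
    filter_upwards [hWb, hAb] with ω h1 h2
    rw [abs_mul, abs_of_pos (Real.exp_pos _), abs_of_pos (Real.cosh_pos _)]
    refine mul_le_mul (Real.exp_le_exp.2 ((le_abs_self _).trans h1))
      ((cosh_le_exp_abs' _).trans (Real.exp_le_exp.2 ?_)) (Real.cosh_pos _).le (Real.exp_pos _).le
    rw [abs_mul, abs_of_pos hu]
    exact mul_le_mul_of_nonneg_right h2 hu.le
  have hg2d_int : Integrable (fun ω => Real.exp (W ω) * Real.sinh (A ω * u) * d ω) μ := by
    refine integrable_of_abs_bound
      ((hWm.exp.mul (hAm.mul measurable_const).sinh).mul hd).aestronglyMeasurable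
      (C := Real.exp B * Real.exp (c*u) * u) ?_
    filter_upwards [hWb, hAb, hdb] with ω h1 h2 h3
    rw [abs_mul, abs_mul, abs_of_pos (Real.exp_pos _)]
    refine mul_le_mul (mul_le_mul (Real.exp_le_exp.2 ((le_abs_self _).trans h1))
      ((abs_sinh_le_exp_abs' _).trans (Real.exp_le_exp.2 ?_)) (abs_nonneg _) (Real.exp_pos _).le)
      h3 (abs_nonneg _) (by positivity)
    rw [abs_mul, abs_of_pos hu]
    exact mul_le_mul_of_nonneg_right h2 hu.le
  have hg3_int : Integrable (fun ω => Real.exp (W ω) * Real.sinh (A ω * u) * (d ω / u)) μ := by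
    have : (fun ω => Real.exp (W ω) * Real.sinh (A ω * u) * (d ω / u))
        = fun ω => (Real.exp (W ω) * Real.sinh (A ω * u) * d ω) * (1/u) := by
      funext ω; field_simp
    rw [this]
    exact hg2d_int.mul_const _
  -- step 3 : the conditional-mean-zero part integrates to zero
  have hd_int : Integrable d μ := by
    refine integrable_of_abs_bound hd.aestronglyMeasurable (C := u) hdb
  have hzero : ∫ ω, Real.exp (W ω) * Real.sinh (A ω * u) * d ω ∂μ = 0 := by
    have hg2sm : StronglyMeasurable[m] (fun ω => Real.exp (W ω) * Real.sinh (A ω * u)) :=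
      (hW.exp.mul (hA.mul measurable_const).sinh).stronglyMeasurable
    have hmul := condExp_mul_of_stronglyMeasurable_left (μ := μ) hg2sm
      (show Integrable ((fun ω => Real.exp (W ω) * Real.sinh (A ω * u)) * d) μ from hg2d_int)
      hd_int
    have hcondzero : μ[(fun ω => Real.exp (W ω) * Real.sinh (A ω * u)) * d | m] =ᵐ[μ] 0 := by
      refine hmul.trans ?_
      filter_upwards [hmean] with ω hω
      simp only [Pi.mul_apply, Pi.zero_apply, hω, mul_zero]
    calc ∫ ω, Real.exp (W ω) * Real.sinh (A ω * u) * d ω ∂μ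
        = ∫ ω, ((fun ω => Real.exp (W ω) * Real.sinh (A ω * u)) * d) ω ∂μ := rfl
      _ = ∫ ω, (μ[(fun ω => Real.exp (W ω) * Real.sinh (A ω * u)) * d | m]) ω ∂μ :=
          (integral_condExp hm (f := (fun ω => Real.exp (W ω) * Real.sinh (A ω * u)) * d)).symm
      _ = ∫ ω, (0 : Ω → ℝ) ω ∂μ := integral_congr_ae hcondzero
      _ = 0 := by simp
  -- step 1 : pointwise convexity bound
  have step1 : ∫ ω, Real.exp (W ω + A ω * d ω) ∂μ
      ≤ ∫ ω, (Real.exp (W ω) * Real.cosh (A ω * u)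
          + Real.exp (W ω) * Real.sinh (A ω * u) * (d ω / u)) ∂μ := by
    refine integral_mono_ae hLHS_int (hg1_int.add hg3_int) ?_
    filter_upwards [hdb] with ω h3
    rw [Real.exp_add]
    calc Real.exp (W ω) * Real.exp (A ω * d ω)
        ≤ Real.exp (W ω) * (Real.cosh (A ω * u) + Real.sinh (A ω * u) * (d ω / u)) :=
          mul_le_mul_of_nonneg_left (exp_mul_le_convex' hu h3) (Real.exp_pos _).le
      _ = Real.exp (W ω) * Real.cosh (A ω * u)
          + Real.exp (W ω) * Real.sinh (A ω * u) * (d ω / u) := by ring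
  have step2 : ∫ ω, (Real.exp (W ω) * Real.cosh (A ω * u)
          + Real.exp (W ω) * Real.sinh (A ω * u) * (d ω / u)) ∂μ
      = ∫ ω, Real.exp (W ω) * Real.cosh (A ω * u) ∂μ := by
    rw [integral_add hg1_int hg3_int]
    have : ∫ ω, Real.exp (W ω) * Real.sinh (A ω * u) * (d ω / u) ∂μ
        = (∫ ω, Real.exp (W ω) * Real.sinh (A ω * u) * d ω ∂μ) * (1/u) := by
      rw [← integral_mul_const]
      congr 1; funext ω; field_simp
    rw [this, hzero]; ring
  have step4 : ∫ ω, Real.exp (W ω) * Real.cosh (A ω * u) ∂μ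
      ≤ Real.exp (c^2 * u^2 / 2) * ∫ ω, Real.exp (W ω) ∂μ := by
    rw [← integral_const_mul]
    refine integral_mono_ae hg1_int (hexpW_int.const_mul _) ?_
    filter_upwards [hAb] with ω h2
    rw [mul_comm (Real.exp (c^2*u^2/2))]
    refine mul_le_mul_of_nonneg_left ?_ (Real.exp_pos _).le
    refine (Real.cosh_le_exp_half_sq _).trans (Real.exp_le_exp.2 ?_)
    have h4 : |A ω * u| ≤ c * u := by
      rw [abs_mul, abs_of_pos hu]
      exact mul_le_mul_of_nonneg_right h2 hu.le
    have h5 : (A ω * u)^2 ≤ (c*u)^2 := sq_le_sq' (neg_le_of_abs_le h4) (le_of_abs_le h4)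
    nlinarith [h5]
  linarith [step1, step2, step4]

private lemma tail_bound {Ω : Type*} {m0 : MeasurableSpace Ω} (μ : Measure Ω)
    [IsProbabilityMeasure μ] {Y : Ω → ℝ} (hY : Measurable[m0] Y) {C : ℝ}
    (hYb : ∀ᵐ ω ∂μ, |Y ω| ≤ C) {v a M : ℝ} (hv : 0 < v)
    (hmgf : ∫ ω, Real.exp (v * Y ω) ∂μ ≤ M) :
    μ {ω | a ≤ Y ω} ≤ ENNReal.ofReal (Real.exp (-(v*a)) * M) := by
  have hM : 0 ≤ M := le_trans (integral_nonneg fun ω => (Real.exp_pos _).le) hmgf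
  have hint : Integrable (fun ω => Real.exp (v * Y ω)) μ := by
    refine integrable_of_abs_bound ((hY.const_mul v).exp.aestronglyMeasurable)
      (C := Real.exp (|v| * C)) ?_
    filter_upwards [hYb] with ω hω
    rw [abs_of_pos (Real.exp_pos _)]
    refine Real.exp_le_exp.2 ?_
    calc v * Y ω ≤ |v * Y ω| := le_abs_self _
    _ = |v| * |Y ω| := abs_mul _ _
    _ ≤ |v| * C := mul_le_mul_of_nonneg_left hω (abs_nonneg v)
  have hset : {ω | a ≤ Y ω} = {ω | Real.exp (v*a) ≤ Real.exp (v * Y ω)} := by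
    ext ω
    simp only [Set.mem_setOf_eq, Real.exp_le_exp]
    exact (mul_le_mul_iff_right₀ hv).symm
  have hε : (0:ℝ) < Real.exp (v*a) := Real.exp_pos _
  have h2 : Real.exp (v*a) * (μ {ω | a ≤ Y ω}).toReal ≤ M := by
    rw [hset]
    exact (mul_meas_ge_le_integral_of_nonneg
      (Filter.Eventually.of_forall fun ω => (Real.exp_pos _).le) hint _).trans hmgf
  have h1 : (μ {ω | a ≤ Y ω}).toReal ≤ Real.exp (-(v*a)) * M := by
    rw [Real.exp_neg, inv_mul_eq_div, le_div_iff₀ hε]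
    linarith [h2]
  calc μ {ω | a ≤ Y ω} = ENNReal.ofReal ((μ {ω | a ≤ Y ω}).toReal) :=
        (ENNReal.ofReal_toReal (measure_ne_top μ _)).symm
  _ ≤ ENNReal.ofReal (Real.exp (-(v*a)) * M) := ENNReal.ofReal_le_ofReal h1

private def Babs (x : ℕ → ℝ) (j i : ℕ) : ℝ :=
  ∑ k ∈ Finset.Ico ((i-1) * 2^j) (i * 2^j), |x (k+1)|

private def cst (x : ℕ → ℝ) (u : ℝ) (j i : ℕ) : ℝ := (1+u)^(j-1) * Babs x j i

private def tI (n h j i : ℕ) : ℕ := n - 2^(h-j+1) + i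

private def Lvl {Ω : Type*} (shat : ℕ → ℕ → Ω → ℝ) (j i : ℕ) (ω : Ω) : ℝ :=
  shat (j-1) (2*i-1) ω + shat (j-1) (2*i) ω

private def trm {Ω : Type*} (shat : ℕ → ℕ → Ω → ℝ) (δ : ℕ → Ω → ℝ) (n h j i : ℕ) (ω : Ω) : ℝ :=
  Lvl shat j i ω * δ (tI n h j i) ω

private def GG {Ω : Type*} (shat : ℕ → ℕ → Ω → ℝ) (δ : ℕ → Ω → ℝ) (n h j i : ℕ) (ω : Ω) : ℝ :=
  (∑ j' ∈ Finset.Icc 1 (j-1), ∑ i' ∈ Finset.Icc 1 (2^(h-j')), trm shat δ n h j' i' ω)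
  + ∑ i' ∈ Finset.Icc 1 i, trm shat δ n h j i' ω

private def CC (x : ℕ → ℝ) (u : ℝ) (h j i : ℕ) : ℝ :=
  (∑ j' ∈ Finset.Icc 1 (j-1), ∑ i' ∈ Finset.Icc 1 (2^(h-j')), (cst x u j' i')^2)
  + ∑ i' ∈ Finset.Icc 1 i, (cst x u j i')^2

private def DDb (x : ℕ → ℝ) (u : ℝ) (h j i : ℕ) : ℝ :=
  ((∑ j' ∈ Finset.Icc 1 (j-1), ∑ i' ∈ Finset.Icc 1 (2^(h-j')), cst x u j' i')
  + ∑ i' ∈ Finset.Icc 1 i, cst x u j i') * u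

private def Fs {Ω : Type*} (δ : ℕ → Ω → ℝ) (T : ℕ) : MeasurableSpace Ω :=
  ⨆ r ∈ Set.Icc 1 T, MeasurableSpace.comap (δ r) inferInstance

/-- Probabilistic error bound for pairwise (balanced binary tree) summation of `n = 2^h`
numbers under stochastic rounding, with condition number `K = (Σ|x_i|)/|Σ x_i|` and
`γ_N(u) = (1+u)^N − 1`. The rounding errors `δ_t` are bounded by the unit roundoff `u`
and mean independent: `E[δ_t | δ_1,…,δ_{t−1}] = 0`. -/
theorem pairwise_summation_sr_bound
    {Ω : Type*} {m0 : MeasurableSpace Ω} (μ : Measure Ω) [IsProbabilityMeasure μ]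
    (h : ℕ) (hh : 1 ≤ h) (n : ℕ) (hn : n = 2 ^ h)
    (u : ℝ) (hu0 : 0 < u) (hu1 : u < 1)
    (x : ℕ → ℝ)
    -- exact partial sums
    (s : ℕ → ℕ → ℝ)
    (hs0 : ∀ i, 1 ≤ i → i ≤ n → s 0 i = x i)
    (hsrec : ∀ j i, 1 ≤ j → j ≤ h → 1 ≤ i → i ≤ 2 ^ (h - j) →
      s j i = s (j - 1) (2 * i - 1) + s (j - 1) (2 * i))
    (hsne : ∀ j i, 1 ≤ j → j ≤ h → 1 ≤ i → i ≤ 2 ^ (h - j) → s j i ≠ 0)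
    -- rounding errors: bounded and mean independent
    (δ : ℕ → Ω → ℝ)
    (hδmeas : ∀ t, Measurable (δ t))
    (hδbdd : ∀ t, 1 ≤ t → t ≤ n - 1 → ∀ᵐ ω ∂μ, |δ t ω| ≤ u)
    (hδmean : ∀ t, 1 ≤ t → t ≤ n - 1 →
      μ[δ t | ⨆ r ∈ Set.Icc 1 (t - 1), MeasurableSpace.comap (δ r) inferInstance] =ᵐ[μ] 0)
    -- computed pairwise sums, errors enumerated level by level
    (shat : ℕ → ℕ → Ω → ℝ)
    (hshat0 : ∀ i, 1 ≤ i → i ≤ n → ∀ ω, shat 0 i ω = x i)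
    (hshatrec : ∀ j i, 1 ≤ j → j ≤ h → 1 ≤ i → i ≤ 2 ^ (h - j) → ∀ ω,
      shat j i ω = (shat (j - 1) (2 * i - 1) ω + shat (j - 1) (2 * i) ω) *
        (1 + δ (n - 2 ^ (h - j + 1) + i) ω))
    (K : ℝ) (hK : K = (∑ i ∈ Finset.Icc 1 n, |x i|) / |s h 1|)
    (lam : ℝ) (hlam0 : 0 < lam) (hlam1 : lam < 1) :
    ENNReal.ofReal (1 - lam) ≤
      μ {ω | |shat h 1 ω - s h 1| / |s h 1| ≤
        K * Real.sqrt (u * ((1 + u) ^ (2 * h) - 1)) * Real.sqrt (Real.log (2 / lam))} := by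
  subst hn
  -- ## generic arithmetic helpers
  have hpow : ∀ {a b : ℕ}, a ≤ b → (2:ℕ)^a ≤ 2^b := fun hab => Nat.pow_le_pow_right (by norm_num) hab
  have h2pos : ∀ k : ℕ, 0 < (2:ℕ)^k := fun k => pow_pos (by norm_num) k
  have hu1' : (0:ℝ) < 1 + u := by linarith
  -- ## the a.e. good event
  have hE : ∀ᵐ ω ∂μ, ∀ t ∈ Set.Icc 1 (2^h - 1), |δ t ω| ≤ u :=
    (ae_ball_iff (Set.to_countable _)).2 fun t ht => hδbdd t ht.1 ht.2
  -- ## block decomposition of the exact sums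
  have hblock : ∀ j, j ≤ h → ∀ i, 1 ≤ i → i ≤ 2^(h-j) →
      s j i = ∑ k ∈ Finset.Ico ((i-1) * 2^j) (i * 2^j), x (k+1) := by
    intro j
    induction j with
    | zero =>
      intro _ i hi1 hi2
      obtain ⟨i', rfl⟩ : ∃ i', i = i' + 1 := ⟨i - 1, by omega⟩
      rw [hs0 _ hi1 (by simpa using hi2)]
      simp [Nat.Ico_succ_singleton]
    | succ j ih =>
      intro hj1 i hi1 hi2
      have hjh : j ≤ h := by omega
      have hpow2 : (2:ℕ)^(h-j) = 2 * 2^(h-(j+1)) := by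
        rw [← pow_succ']
        congr 1
        omega
      have e1 := ih hjh (2*i-1) (by omega) (by rw [hpow2]; omega)
      have e2 := ih hjh (2*i) (by omega) (by rw [hpow2]; omega)
      have hrec := hsrec (j+1) i (by omega) hj1 hi1 hi2
      simp only [Nat.add_sub_cancel] at hrec
      have q1 : (2*i-1-1) * 2^j = (i-1) * 2^(j+1) := by
        rw [show 2*i-1-1 = 2*(i-1) by omega, pow_succ]
        ring
      have q2 : (2*i) * 2^j = i * 2^(j+1) := by
        rw [pow_succ]
        ring
      rw [hrec, e1, e2, Finset.sum_Ico_consecutive _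
        (Nat.mul_le_mul (by omega) le_rfl) (Nat.mul_le_mul (by omega) le_rfl), q1, q2]
  have hsum_exact : s h 1 = ∑ k ∈ Finset.Ico 0 (2^h), x (k+1) := by
    simpa using hblock h le_rfl 1 le_rfl (by simp)
  -- the ℓ¹ norm of the data
  set S : ℝ := ∑ k ∈ Finset.Ico 0 (2^h), |x (k+1)| with hSdef
  have hSicc : ∑ i ∈ Finset.Icc 1 (2^h), |x i| = S := by
    rw [hSdef, ← Finset.Ico_add_one_right_eq_Icc, Finset.sum_Ico_eq_sum_range, Finset.sum_Ico_eq_sum_range]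
    refine Finset.sum_congr (by norm_num) fun k _ => by norm_num [Nat.add_comm]
  have hs_ne : s h 1 ≠ 0 := hsne h 1 hh le_rfl le_rfl (by simp)
  have hs_pos : 0 < |s h 1| := abs_pos.2 hs_ne
  have hS_pos : 0 < S := by
    have hle : |s h 1| ≤ S := by
      rw [hsum_exact, hSdef]
      exact Finset.abs_sum_le_sum_abs _ _
    linarith
  -- ## Babs facts
  have hbabs_nonneg : ∀ j i, 0 ≤ Babs x j i :=
    fun j i => Finset.sum_nonneg fun k _ => abs_nonneg _
  have hcst_nonneg : ∀ j i, 0 ≤ cst x u j i :=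
    fun j i => mul_nonneg (pow_nonneg hu1'.le _) (hbabs_nonneg j i)
  have hbabs_merge : ∀ j i, 1 ≤ i → Babs x j (2*i-1) + Babs x j (2*i) = Babs x (j+1) i := by
    intro j i hi
    simp only [Babs]
    have q1 : (2*i-1-1) * 2^j = (i-1) * 2^(j+1) := by
      rw [show 2*i-1-1 = 2*(i-1) by omega, pow_succ]
      ring
    have q2 : (2*i) * 2^j = i * 2^(j+1) := by
      rw [pow_succ]
      ring
    rw [Finset.sum_Ico_consecutive _
      (Nat.mul_le_mul (by omega) le_rfl) (Nat.mul_le_mul (by omega) le_rfl), q1, q2]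
  have hbabs_total : ∀ j, j ≤ h → ∑ i ∈ Finset.Icc 1 (2^(h-j)), Babs x j i = S := by
    intro j hj
    have hpows : (2:ℕ)^(h-j) * 2^j = 2^h := by
      rw [← pow_add]
      congr 1
      omega
    rw [hSdef, ← hpows, ← sum_blocks' (fun k => |x (k+1)|) (2^j) (2^(h-j)),
      ← Finset.Ico_add_one_right_eq_Icc, Finset.sum_Ico_eq_sum_range]
    refine Finset.sum_congr (by norm_num) fun k _ => ?_
    simp only [Babs]
    have e1 : 1 + k - 1 = k := by omega
    rw [e1, Nat.add_comm 1 k]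
  -- ## pointwise bound on the computed sums, on the good event
  have hshat_bd : ∀ ω, (∀ t ∈ Set.Icc 1 (2^h - 1), |δ t ω| ≤ u) → ∀ j, j ≤ h →
      ∀ i, 1 ≤ i → i ≤ 2^(h-j) → |shat j i ω| ≤ (1+u)^j * Babs x j i := by
    intro ω hω j
    induction j with
    | zero =>
      intro _ i hi1 hi2
      rw [hshat0 i hi1 (by simpa using hi2)]
      simp only [Babs, pow_zero, one_mul, mul_one]
      obtain ⟨i', rfl⟩ : ∃ i', i = i' + 1 := ⟨i - 1, by omega⟩
      simp [Nat.Ico_succ_singleton]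
    | succ j ih =>
      intro hj1 i hi1 hi2
      have hjh : j ≤ h := by omega
      have hpow2 : (2:ℕ)^(h-j) = 2 * 2^(h-(j+1)) := by
        rw [show h-j = (h-(j+1))+1 by omega]
        exact pow_succ' 2 _
      have e1 := ih hjh (2*i-1) (by omega) (by rw [hpow2]; omega)
      have e2 := ih hjh (2*i) (by omega) (by rw [hpow2]; omega)
      have hpc : (2:ℕ)^(h-(j+1)+1) = 2 * 2^(h-(j+1)) := pow_succ' 2 _
      have ht1 : 1 ≤ 2^h - 2^(h-(j+1)+1) + i := by omega
      have ht2 : 2^h - 2^(h-(j+1)+1) + i ≤ 2^h - 1 := by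
        have hle := hpow (show h-(j+1)+1 ≤ h by omega)
        have := h2pos (h-(j+1))
        omega
      have hδb := hω _ ⟨ht1, ht2⟩
      rw [hshatrec (j+1) i (by omega) hj1 hi1 hi2 ω]
      simp only [Nat.add_sub_cancel]
      rw [abs_mul]
      have hb1 : |1 + δ (2^h - 2^(h-(j+1)+1) + i) ω| ≤ 1 + u := by
        refine (abs_add_le _ _).trans ?_
        rw [abs_one]
        linarith [hδb]
      have habs : |shat j (2*i-1) ω + shat j (2*i) ω|
          ≤ (1+u)^j * (Babs x j (2*i-1) + Babs x j (2*i)) := by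
        refine (abs_add_le _ _).trans ?_
        rw [mul_add]
        exact add_le_add e1 e2
      rw [hbabs_merge j i hi1] at habs
      refine (mul_le_mul habs hb1 (abs_nonneg _) ?_).trans_eq ?_
      · exact mul_nonneg (pow_nonneg hu1'.le j) (hbabs_nonneg (j+1) i)
      · rw [pow_succ]
        ring
  have hLvl_bd : ∀ ω, (∀ t ∈ Set.Icc 1 (2^h - 1), |δ t ω| ≤ u) → ∀ j, 1 ≤ j → j ≤ h →
      ∀ i, 1 ≤ i → i ≤ 2^(h-j) → |Lvl shat j i ω| ≤ cst x u j i := by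
    intro ω hω j hj1 hjh i hi1 hi2
    simp only [Lvl, cst]
    have hpow2 : (2:ℕ)^(h-(j-1)) = 2 * 2^(h-j) := by
      rw [show h-(j-1) = (h-j)+1 by omega]
      exact pow_succ' 2 _
    have e1 := hshat_bd ω hω (j-1) (by omega) (2*i-1) (by omega) (by rw [hpow2]; omega)
    have e2 := hshat_bd ω hω (j-1) (by omega) (2*i) (by omega) (by rw [hpow2]; omega)
    have hm := hbabs_merge (j-1) i hi1
    rw [show j-1+1 = j by omega] at hm
    rw [← hm, mul_add]
    exact (abs_add_le _ _).trans (add_le_add e1 e2)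
  -- ## index range facts
  have htI_range : ∀ j i, 1 ≤ j → j ≤ h → 1 ≤ i → i ≤ 2^(h-j) →
      1 ≤ tI (2^h) h j i ∧ tI (2^h) h j i ≤ 2^h - 1 := by
    intro j i hj1 hjh hi1 hi2
    have h1 := hpow (show h-j+1 ≤ h by omega)
    have h2 : (2:ℕ)^(h-j+1) = 2 * 2^(h-j) := pow_succ' 2 _
    have := h2pos (h-j)
    simp only [tI]
    omega
  -- ## measurability
  have hFle : ∀ T, Fs δ T ≤ m0 := by
    intro T
    simp only [Fs]
    exact iSup_le fun r => iSup_le fun _ => measurable_iff_comap_le.1 (hδmeas r)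
  have hFmono : ∀ {T T' : ℕ}, T ≤ T' → Fs δ T ≤ Fs δ T' := by
    intro T T' hTT'
    simp only [Fs]
    exact iSup_le fun r => iSup_le fun hr =>
      le_biSup (fun r => MeasurableSpace.comap (δ r) inferInstance) ⟨hr.1, hr.2.trans hTT'⟩
  have hδF : ∀ r T, 1 ≤ r → r ≤ T → Measurable[Fs δ T] (δ r) := by
    intro r T hr1 hrT
    have hle : MeasurableSpace.comap (δ r) inferInstance ≤ Fs δ T :=
      le_biSup (fun r => MeasurableSpace.comap (δ r) inferInstance)
        (⟨hr1, hrT⟩ : r ∈ Set.Icc 1 T)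
    exact fun t ht => hle _ ⟨t, ht, rfl⟩
  have hshat_meas : ∀ j, 1 ≤ j → j ≤ h → ∀ i, 1 ≤ i → i ≤ 2^(h-j) →
      Measurable[Fs δ (tI (2^h) h j i)] (shat j i) := by
    intro j
    induction j with
    | zero => omega
    | succ j ih =>
      intro _ hjh i hi1 hi2
      have ht := htI_range (j+1) i (by omega) hjh hi1 hi2
      by_cases hj0 : j = 0
      · subst hj0
        have hi2' : i ≤ 2^(h-1) := by simpa using hi2
        have hp : (2:ℕ)^h = 2 * 2^(h-1) := by
          rw [show h = (h-1)+1 by omega]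
          exact pow_succ' 2 _
        have hrw : shat 1 i = fun ω =>
            (x (2*i-1) + x (2*i)) * (1 + δ (tI (2^h) h 1 i) ω) := by
          funext ω
          rw [hshatrec 1 i le_rfl hh hi1 (by simpa using hi2) ω]
          simp only [Nat.sub_self, tI]
          rw [hshat0 (2*i-1) (by omega) (by omega), hshat0 (2*i) (by omega) (by omega)]
        rw [hrw]
        exact (measurable_const.add (hδF _ _ ht.1 le_rfl)).const_mul _
      · have hj1 : 1 ≤ j := by omega
        have hjh' : j ≤ h := by omega
        have hpow2 : (2:ℕ)^(h-j) = 2 * 2^(h-(j+1)) := by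
          rw [show h-j = (h-(j+1))+1 by omega]
          exact pow_succ' 2 _
        have hpow3 : (2:ℕ)^(h-j+1) = 2 * 2^(h-j) := pow_succ' 2 _
        have hpow4 := hpow (show h-j+1 ≤ h by omega)
        have m1 := ih hj1 hjh' (2*i-1) (by omega) (by rw [hpow2]; omega)
        have m2 := ih hj1 hjh' (2*i) (by omega) (by rw [hpow2]; omega)
        have hle1 : tI (2^h) h j (2*i-1) ≤ tI (2^h) h (j+1) i := by
          simp only [tI, show h-(j+1)+1 = h-j by omega]
          omega
        have hle2 : tI (2^h) h j (2*i) ≤ tI (2^h) h (j+1) i := by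
          simp only [tI, show h-(j+1)+1 = h-j by omega]
          omega
        have m1' : Measurable[Fs δ (tI (2^h) h (j+1) i)] (shat j (2*i-1)) :=
          m1.mono (hFmono hle1) le_rfl
        have m2' : Measurable[Fs δ (tI (2^h) h (j+1) i)] (shat j (2*i)) :=
          m2.mono (hFmono hle2) le_rfl
        have hrw : shat (j+1) i = fun ω =>
            (shat j (2*i-1) ω + shat j (2*i) ω) * (1 + δ (tI (2^h) h (j+1) i) ω) := by
          funext ω
          rw [hshatrec (j+1) i (by omega) hjh hi1 hi2 ω]
          simp only [Nat.add_sub_cancel, tI]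
        rw [hrw]
        exact (m1'.add m2').mul (measurable_const.add (hδF _ _ ht.1 le_rfl))
  have hLvl_meas : ∀ j, 1 ≤ j → j ≤ h → ∀ i, 1 ≤ i → i ≤ 2^(h-j) →
      Measurable[Fs δ (tI (2^h) h j i - 1)] (Lvl shat j i) := by
    intro j hj1 hjh i hi1 hi2
    show Measurable[Fs δ (tI (2^h) h j i - 1)]
      fun ω => shat (j-1) (2*i-1) ω + shat (j-1) (2*i) ω
    by_cases hj0 : j = 1
    · subst hj0
      have hp : (2:ℕ)^h = 2 * 2^(h-1) := by
        rw [show h = (h-1)+1 by omega]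
        exact pow_succ' 2 _
      have hi2' : i ≤ 2^(h-1) := by simpa using hi2
      have hrw : (fun ω => shat 0 (2*i-1) ω + shat 0 (2*i) ω)
          = fun _ : Ω => x (2*i-1) + x (2*i) := by
        funext ω
        rw [hshat0 (2*i-1) (by omega) (by omega), hshat0 (2*i) (by omega) (by omega)]
      simp only [Nat.sub_self] at *
      rw [hrw]
      exact measurable_const
    · have hj2 : 2 ≤ j := by omega
      have hpow2 : (2:ℕ)^(h-(j-1)) = 2 * 2^(h-j) := by
        rw [show h-(j-1) = (h-j)+1 by omega]
        exact pow_succ' 2 _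
      have hpow3 : (2:ℕ)^(h-(j-1)+1) = 2 * 2^(h-(j-1)) := pow_succ' 2 _
      have hpow4 : (2:ℕ)^(h-j+1) = 2 * 2^(h-j) := pow_succ' 2 _
      have hpow5 := hpow (show h-j+1 ≤ h by omega)
      have hpow6 := hpow (show h-(j-1)+1 ≤ h by omega)
      have m1 := hshat_meas (j-1) (by omega) (by omega) (2*i-1) (by omega) (by rw [hpow2]; omega)
      have m2 := hshat_meas (j-1) (by omega) (by omega) (2*i) (by omega) (by rw [hpow2]; omega)
      have hle1 : tI (2^h) h (j-1) (2*i-1) ≤ tI (2^h) h j i - 1 := by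
        simp only [tI]
        omega
      have hle2 : tI (2^h) h (j-1) (2*i) ≤ tI (2^h) h j i - 1 := by
        simp only [tI]
        omega
      exact (m1.mono (hFmono hle1) le_rfl).add (m2.mono (hFmono hle2) le_rfl)
  have htrm_meas : ∀ j i, 1 ≤ j → j ≤ h → 1 ≤ i → i ≤ 2^(h-j) →
      Measurable[Fs δ (tI (2^h) h j i)] (trm shat δ (2^h) h j i) := by
    intro j i hj1 hjh hi1 hi2
    have ht := htI_range j i hj1 hjh hi1 hi2
    have m1 : Measurable[Fs δ (tI (2^h) h j i)] (Lvl shat j i) :=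
      (hLvl_meas j hj1 hjh i hi1 hi2).mono (hFmono (Nat.sub_le _ _)) le_rfl
    exact show Measurable[Fs δ (tI (2^h) h j i)]
      fun ω => Lvl shat j i ω * δ (tI (2^h) h j i) ω from m1.mul (hδF _ _ ht.1 le_rfl)
  have hG_meas : ∀ j, 1 ≤ j → j ≤ h → ∀ i, i ≤ 2^(h-j) →
      Measurable[Fs δ (tI (2^h) h j i)] (GG shat δ (2^h) h j i) := by
    intro j hj1 hjh i hi2
    show Measurable[Fs δ (tI (2^h) h j i)] fun ω =>
      (∑ j' ∈ Finset.Icc 1 (j-1), ∑ i' ∈ Finset.Icc 1 (2^(h-j')), trm shat δ (2^h) h j' i' ω)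
      + ∑ i' ∈ Finset.Icc 1 i, trm shat δ (2^h) h j i' ω
    refine Measurable.add ?_ ?_
    · refine Finset.measurable_sum _ fun j' hj' => ?_
      rw [Finset.mem_Icc] at hj'
      refine Finset.measurable_sum _ fun i' hi' => ?_
      rw [Finset.mem_Icc] at hi'
      have hle : tI (2^h) h j' i' ≤ tI (2^h) h j i := by
        have hp1 : (2:ℕ)^(h-j'+1) = 2 * 2^(h-j') := pow_succ' 2 _
        have hp2 := hpow (show h-j+1 ≤ h-j' by omega)
        have hp3 := hpow (show h-j'+1 ≤ h by omega)
        simp only [tI]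
        omega
      exact (htrm_meas j' i' (by omega) (by omega) hi'.1 hi'.2).mono (hFmono hle) le_rfl
    · refine Finset.measurable_sum _ fun i' hi' => ?_
      rw [Finset.mem_Icc] at hi'
      have hle : tI (2^h) h j i' ≤ tI (2^h) h j i := by
        simp only [tI]
        omega
      exact (htrm_meas j i' hj1 hjh hi'.1 (by omega)).mono (hFmono hle) le_rfl
  -- ## a.e. bound on GG
  have hG_bd : ∀ j, 1 ≤ j → j ≤ h → ∀ i, i ≤ 2^(h-j) → ∀ ω,
      (∀ t ∈ Set.Icc 1 (2^h - 1), |δ t ω| ≤ u) → |GG shat δ (2^h) h j i ω| ≤ DDb x u h j i := by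
    intro j hj1 hjh i hi2 ω hω
    have hterm : ∀ j' i', 1 ≤ j' → j' ≤ h → 1 ≤ i' → i' ≤ 2^(h-j') →
        |trm shat δ (2^h) h j' i' ω| ≤ cst x u j' i' * u := by
      intro j' i' a b c d
      have ht := htI_range j' i' a b c d
      simp only [trm]
      rw [abs_mul]
      exact mul_le_mul (hLvl_bd ω hω j' a b i' c d) (hω _ ⟨ht.1, ht.2⟩) (abs_nonneg _)
        (hcst_nonneg _ _)
    have hDD : DDb x u h j i
        = (∑ j' ∈ Finset.Icc 1 (j-1), ∑ i' ∈ Finset.Icc 1 (2^(h-j')), cst x u j' i' * u)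
          + ∑ i' ∈ Finset.Icc 1 i, cst x u j i' * u := by
      simp only [DDb]
      rw [add_mul, Finset.sum_mul, Finset.sum_mul]
      congr 1
      exact Finset.sum_congr rfl fun j' _ => Finset.sum_mul _ _ _
    simp only [GG]
    rw [hDD]
    refine (abs_add_le _ _).trans (add_le_add ?_ ?_)
    · refine (Finset.abs_sum_le_sum_abs _ _).trans (Finset.sum_le_sum fun j' hj' => ?_)
      rw [Finset.mem_Icc] at hj'
      refine (Finset.abs_sum_le_sum_abs _ _).trans (Finset.sum_le_sum fun i' hi' => ?_)
      rw [Finset.mem_Icc] at hi'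
      exact hterm j' i' (by omega) (by omega) hi'.1 hi'.2
    · refine (Finset.abs_sum_le_sum_abs _ _).trans (Finset.sum_le_sum fun i' hi' => ?_)
      rw [Finset.mem_Icc] at hi'
      exact hterm j i' hj1 hjh hi'.1 (by omega)
  -- ## telescoping identity
  have htele : ∀ ω, GG shat δ (2^h) h h 1 ω = shat h 1 ω - s h 1 := by
    intro ω
    have hlev : ∀ j, 1 ≤ j → j ≤ h →
        (∑ i ∈ Finset.range (2^(h-j)), shat j (i+1) ω)
          = (∑ i ∈ Finset.range (2^(h-j+1)), shat (j-1) (i+1) ω)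
            + ∑ i' ∈ Finset.Icc 1 (2^(h-j)), trm shat δ (2^h) h j i' ω := by
      intro j hj1 hjh
      have hp : (2:ℕ)^(h-j+1) = 2 * 2^(h-j) := pow_succ' 2 _
      rw [hp, sum_range_two_mul']
      have hreidx : ∑ i' ∈ Finset.Icc 1 (2^(h-j)), trm shat δ (2^h) h j i' ω
          = ∑ i ∈ Finset.range (2^(h-j)), trm shat δ (2^h) h j (i+1) ω := by
        rw [← Finset.Ico_add_one_right_eq_Icc, Finset.sum_Ico_eq_sum_range]
        exact Finset.sum_congr (by norm_num) fun k _ => by rw [Nat.add_comm]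
      rw [hreidx, ← Finset.sum_add_distrib]
      refine Finset.sum_congr rfl fun k hk => ?_
      rw [Finset.mem_range] at hk
      rw [hshatrec j (k+1) hj1 hjh (by omega) (by omega) ω]
      simp only [trm, Lvl, tI]
      rw [show 2*(k+1)-1 = 2*k+1 by omega, show 2*(k+1) = 2*k+1+1 by omega]
      ring
    have hmain : ∀ j, j ≤ h → (∑ i ∈ Finset.range (2^(h-j)), shat j (i+1) ω)
        = (∑ i ∈ Finset.range (2^h), x (i+1))
          + ∑ j' ∈ Finset.Icc 1 j, ∑ i' ∈ Finset.Icc 1 (2^(h-j')),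
              trm shat δ (2^h) h j' i' ω := by
      intro j
      induction j with
      | zero =>
        intro _
        rw [show Finset.Icc 1 0 = (∅ : Finset ℕ) from rfl]
        simp only [Finset.sum_empty, add_zero, Nat.sub_zero]
        exact Finset.sum_congr rfl fun k hk => by
          rw [Finset.mem_range] at hk
          rw [hshat0 (k+1) (by omega) (by omega)]
      | succ j ih =>
        intro hjh
        have e := hlev (j+1) (by omega) hjh
        rw [show h-(j+1)+1 = h-j by omega] at e
        simp only [Nat.add_sub_cancel] at e
        rw [e, ih (by omega), Finset.sum_Icc_succ_top (show 1 ≤ j+1 by omega)]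
        ring
    have hfin := hmain h le_rfl
    rw [Nat.sub_self, pow_zero] at hfin
    simp only [Finset.range_one, Finset.sum_singleton] at hfin
    have hstep := Finset.sum_Icc_succ_top (a := 1) (b := h-1)
      (f := fun j' => ∑ i' ∈ Finset.Icc 1 (2^(h-j')), trm shat δ (2^h) h j' i' ω) (by omega)
    rw [show h-1+1 = h by omega] at hstep
    have hGfull : GG shat δ (2^h) h h 1 ω
        = ∑ j' ∈ Finset.Icc 1 h, ∑ i' ∈ Finset.Icc 1 (2^(h-j')),
            trm shat δ (2^h) h j' i' ω := by
      rw [hstep]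
      simp only [GG, Nat.sub_self, pow_zero]
    have hsexact : s h 1 = ∑ i ∈ Finset.range (2^h), x (i+1) := by
      rw [hsum_exact, ← Finset.range_eq_Ico]
    rw [hGfull, hfin, hsexact]
    ring
  -- ## the martingale mgf bound
  have key : ∀ v : ℝ, ∀ j, 1 ≤ j → j ≤ h → ∀ i, i ≤ 2^(h-j) →
      ∫ ω, Real.exp (v * GG shat δ (2^h) h j i ω) ∂μ
        ≤ Real.exp (v^2 * u^2 / 2 * CC x u h j i) := by
    intro v j
    induction j with
    | zero => omega
    | succ j ihj =>
      intro _ hjh i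
      induction i with
      | zero =>
        intro _
        by_cases hj0 : j = 0
        · subst hj0
          have hgg : (fun ω => Real.exp (v * GG shat δ (2^h) h 1 0 ω)) = fun _ => (1:ℝ) := by
            funext ω
            simp only [GG, show Finset.Icc 1 0 = (∅ : Finset ℕ) from rfl, Finset.sum_empty,
              add_zero, mul_zero, Real.exp_zero]
          have hcc : CC x u h 1 0 = 0 := by
            simp only [CC, show Finset.Icc 1 0 = (∅ : Finset ℕ) from rfl, Finset.sum_empty,
              add_zero]
          rw [hgg, hcc, mul_zero, Real.exp_zero]
          simp
        · have hj1 : 1 ≤ j := by omega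
          have e1 : (fun ω => Real.exp (v * GG shat δ (2^h) h (j+1) 0 ω))
              = fun ω => Real.exp (v * GG shat δ (2^h) h j (2^(h-j)) ω) := by
            funext ω
            congr 1
            simp only [GG, Nat.add_sub_cancel, show Finset.Icc 1 0 = (∅ : Finset ℕ) from rfl,
              Finset.sum_empty, add_zero]
            have hstep := Finset.sum_Icc_succ_top (a := 1) (b := j-1)
              (f := fun j' => ∑ i' ∈ Finset.Icc 1 (2^(h-j')), trm shat δ (2^h) h j' i' ω)
              (by omega)
            rw [show j-1+1 = j by omega] at hstep
            rw [hstep]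
          have e2 : CC x u h (j+1) 0 = CC x u h j (2^(h-j)) := by
            simp only [CC, Nat.add_sub_cancel, show Finset.Icc 1 0 = (∅ : Finset ℕ) from rfl,
              Finset.sum_empty, add_zero]
            have hstep := Finset.sum_Icc_succ_top (a := 1) (b := j-1)
              (f := fun j' => ∑ i' ∈ Finset.Icc 1 (2^(h-j')), (cst x u j' i')^2)
              (by omega)
            rw [show j-1+1 = j by omega] at hstep
            rw [hstep]
          rw [e1, e2]
          exact ihj hj1 (by omega) _ le_rfl
      | succ i ihi =>
        intro hi1
        have hii : i ≤ 2^(h-(j+1)) := by omega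
        have hIH := ihi hii
        have ht := htI_range (j+1) (i+1) (by omega) hjh (by omega) hi1
        have htm1 : tI (2^h) h (j+1) (i+1) - 1 = tI (2^h) h (j+1) i := by
          simp only [tI]
          omega
        have hWmeas : Measurable[Fs δ (tI (2^h) h (j+1) (i+1) - 1)]
            (fun ω => v * GG shat δ (2^h) h (j+1) i ω) := by
          rw [htm1]
          exact (hG_meas (j+1) (by omega) hjh i hii).const_mul v
        have hWb : ∀ᵐ ω ∂μ, |v * GG shat δ (2^h) h (j+1) i ω|
            ≤ |v| * DDb x u h (j+1) i := by
          filter_upwards [hE] with ω hω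
          rw [abs_mul]
          exact mul_le_mul_of_nonneg_left (hG_bd (j+1) (by omega) hjh i hii ω hω)
            (abs_nonneg v)
        have hAmeas : Measurable[Fs δ (tI (2^h) h (j+1) (i+1) - 1)]
            (fun ω => v * Lvl shat (j+1) (i+1) ω) :=
          (hLvl_meas (j+1) (by omega) hjh (i+1) (by omega) hi1).const_mul v
        have hAb : ∀ᵐ ω ∂μ, |v * Lvl shat (j+1) (i+1) ω|
            ≤ |v| * cst x u (j+1) (i+1) := by
          filter_upwards [hE] with ω hω
          rw [abs_mul]
          exact mul_le_mul_of_nonneg_left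
            (hLvl_bd ω hω (j+1) (by omega) hjh (i+1) (by omega) hi1) (abs_nonneg v)
        have hdmean' : μ[δ (tI (2^h) h (j+1) (i+1)) | Fs δ (tI (2^h) h (j+1) (i+1) - 1)]
            =ᵐ[μ] 0 := hδmean _ ht.1 ht.2
        have hstep := mgf_step μ (hFle (tI (2^h) h (j+1) (i+1) - 1)) hu0
          (mul_nonneg (abs_nonneg v) (hcst_nonneg (j+1) (i+1))) hWmeas hWb hAmeas hAb
          (hδmeas _) (hδbdd _ ht.1 ht.2) hdmean'
        have hfun : (fun ω => Real.exp ((v * GG shat δ (2^h) h (j+1) i ω)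
              + (v * Lvl shat (j+1) (i+1) ω) * δ (tI (2^h) h (j+1) (i+1)) ω))
            = fun ω => Real.exp (v * GG shat δ (2^h) h (j+1) (i+1) ω) := by
          funext ω
          congr 1
          simp only [GG, trm]
          rw [Finset.sum_Icc_succ_top (show 1 ≤ i+1 by omega)]
          ring
        have hCrec : CC x u h (j+1) (i+1) = CC x u h (j+1) i + (cst x u (j+1) (i+1))^2 := by
          simp only [CC]
          rw [Finset.sum_Icc_succ_top (show 1 ≤ i+1 by omega)]
          ring
        calc ∫ ω, Real.exp (v * GG shat δ (2^h) h (j+1) (i+1) ω) ∂μ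
            = ∫ ω, Real.exp ((v * GG shat δ (2^h) h (j+1) i ω)
                + (v * Lvl shat (j+1) (i+1) ω) * δ (tI (2^h) h (j+1) (i+1)) ω) ∂μ := by
              rw [hfun]
          _ ≤ Real.exp ((|v| * cst x u (j+1) (i+1))^2 * u^2 / 2)
                * ∫ ω, Real.exp (v * GG shat δ (2^h) h (j+1) i ω) ∂μ := hstep
          _ ≤ Real.exp ((|v| * cst x u (j+1) (i+1))^2 * u^2 / 2)
                * Real.exp (v^2 * u^2 / 2 * CC x u h (j+1) i) :=
              mul_le_mul_of_nonneg_left hIH (Real.exp_pos _).le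
          _ = Real.exp (v^2 * u^2 / 2 * CC x u h (j+1) (i+1)) := by
              rw [← Real.exp_add, hCrec]
              congr 1
              rw [mul_pow, sq_abs]
              ring
  -- ## the variance bound
  have hCtot : CC x u h h 1 * u^2 ≤ S^2 * (u * ((1+u)^(2*h) - 1)) / 2 := by
    have hq1 : (1:ℝ) < (1+u)^2 := by nlinarith
    have hCfull : CC x u h h 1
        = ∑ j' ∈ Finset.Icc 1 h, ∑ i' ∈ Finset.Icc 1 (2^(h-j')), (cst x u j' i')^2 := by
      have hstep := Finset.sum_Icc_succ_top (a := 1) (b := h-1)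
        (f := fun j' => ∑ i' ∈ Finset.Icc 1 (2^(h-j')), (cst x u j' i')^2) (by omega)
      rw [show h-1+1 = h by omega] at hstep
      rw [hstep]
      simp only [CC, Nat.sub_self, pow_zero]
    have hlev : ∀ j' ∈ Finset.Icc 1 h,
        ∑ i' ∈ Finset.Icc 1 (2^(h-j')), (cst x u j' i')^2 ≤ ((1+u)^2)^(j'-1) * S^2 := by
      intro j' hj'
      rw [Finset.mem_Icc] at hj'
      have htot := hbabs_total j' hj'.2
      have hsq : ∑ i' ∈ Finset.Icc 1 (2^(h-j')), (Babs x j' i')^2 ≤ S^2 := by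
        calc ∑ i' ∈ Finset.Icc 1 (2^(h-j')), (Babs x j' i')^2
            ≤ ∑ i' ∈ Finset.Icc 1 (2^(h-j')), Babs x j' i' * S := by
              refine Finset.sum_le_sum fun i' hi' => ?_
              rw [sq]
              refine mul_le_mul_of_nonneg_left ?_ (hbabs_nonneg _ _)
              rw [← htot]
              exact Finset.single_le_sum (fun k _ => hbabs_nonneg j' k) hi'
          _ = S^2 := by rw [← Finset.sum_mul, htot, sq]
      calc ∑ i' ∈ Finset.Icc 1 (2^(h-j')), (cst x u j' i')^2
          = ((1+u)^(j'-1))^2 * ∑ i' ∈ Finset.Icc 1 (2^(h-j')), (Babs x j' i')^2 := by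
            rw [Finset.mul_sum]
            exact Finset.sum_congr rfl fun i' _ => by simp only [cst]; ring
        _ ≤ ((1+u)^(j'-1))^2 * S^2 := mul_le_mul_of_nonneg_left hsq (sq_nonneg _)
        _ = ((1+u)^2)^(j'-1) * S^2 := by rw [← pow_mul, ← pow_mul, Nat.mul_comm]
    have hgeom : ∑ j' ∈ Finset.Icc 1 h, ((1+u)^2)^(j'-1)
        = ((1+u)^(2*h) - 1) / ((1+u)^2 - 1) := by
      have hreidx : ∑ j' ∈ Finset.Icc 1 h, ((1+u)^2)^(j'-1)
          = ∑ k ∈ Finset.range h, ((1+u)^2)^k := by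
        rw [← Finset.Ico_add_one_right_eq_Icc, Finset.sum_Ico_eq_sum_range]
        refine Finset.sum_congr (by norm_num) fun k _ => by rw [show 1+k-1 = k by omega]
      rw [hreidx, geom_sum_eq hq1.ne' h, pow_mul]
    have hsum_le : CC x u h h 1 ≤ ((1+u)^(2*h) - 1) / ((1+u)^2 - 1) * S^2 := by
      rw [hCfull]
      calc ∑ j' ∈ Finset.Icc 1 h, ∑ i' ∈ Finset.Icc 1 (2^(h-j')), (cst x u j' i')^2
          ≤ ∑ j' ∈ Finset.Icc 1 h, ((1+u)^2)^(j'-1) * S^2 := Finset.sum_le_sum hlev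
        _ = (∑ j' ∈ Finset.Icc 1 h, ((1+u)^2)^(j'-1)) * S^2 := (Finset.sum_mul _ _ _).symm
        _ = ((1+u)^(2*h) - 1) / ((1+u)^2 - 1) * S^2 := by rw [hgeom]
    have hγ : (0:ℝ) ≤ (1+u)^(2*h) - 1 := by
      have h1 : (1:ℝ) ≤ (1+u)^(2*h) := one_le_pow₀ (by linarith : (1:ℝ) ≤ 1+u)
      linarith
    have hq0 : (0:ℝ) < (1+u)^2 - 1 := by nlinarith
    have hfrac : u^2 / ((1+u)^2 - 1) ≤ u / 2 := by
      rw [div_le_div_iff₀ hq0 (by norm_num : (0:ℝ) < 2)]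
      nlinarith
    calc CC x u h h 1 * u^2
        ≤ (((1+u)^(2*h) - 1) / ((1+u)^2 - 1) * S^2) * u^2 :=
          mul_le_mul_of_nonneg_right hsum_le (sq_nonneg u)
      _ = S^2 * ((1+u)^(2*h) - 1) * (u^2 / ((1+u)^2 - 1)) := by
          field_simp
      _ ≤ S^2 * ((1+u)^(2*h) - 1) * (u / 2) :=
          mul_le_mul_of_nonneg_left hfrac (mul_nonneg (sq_nonneg S) hγ)
      _ = S^2 * (u * ((1+u)^(2*h) - 1)) / 2 := by ring
  -- ## Chernoff for both tails and conclusion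
  set γ : ℝ := u * ((1 + u) ^ (2 * h) - 1) with hγdef
  set L : ℝ := Real.log (2/lam) with hLdef
  set a : ℝ := S * Real.sqrt γ * Real.sqrt L with hadef
  set V : ℝ := S^2 * γ / 2 with hVdef
  set v : ℝ := a / V with hvdef
  clear_value v
  clear_value V
  clear_value a
  clear_value L
  clear_value γ
  have hγpos : 0 < γ := by
    have h1 : (1:ℝ) < (1+u)^(2*h) := one_lt_pow₀ (by linarith) (by omega)
    rw [hγdef]
    apply mul_pos hu0
    linarith
  have hL : (0:ℝ) < L := by
    rw [hLdef]
    exact Real.log_pos (by rw [lt_div_iff₀ hlam0]; linarith)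
  have hapos : 0 < a := by
    rw [hadef]
    exact mul_pos (mul_pos hS_pos (Real.sqrt_pos.2 hγpos)) (Real.sqrt_pos.2 hL)
  have hVpos : 0 < V := by
    rw [hVdef]
    exact div_pos (mul_pos (pow_pos hS_pos 2) hγpos) two_pos
  have hvpos : 0 < v := by
    rw [hvdef]
    exact div_pos hapos hVpos
  have ha2 : a^2 = S^2 * γ * L := by
    rw [hadef, mul_pow, mul_pow, Real.sq_sqrt hγpos.le, Real.sq_sqrt hL.le]
  have hone : (1:ℕ) ≤ 2^(h-h) := by simp
  have hCCu : v^2 * u^2 / 2 * CC x u h h 1 ≤ v^2 / 2 * V := by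
    have e : v^2*u^2/2*CC x u h h 1 = v^2/2 * (CC x u h h 1 * u^2) := by ring
    rw [e]
    exact mul_le_mul_of_nonneg_left hCtot (by positivity)
  have hmgf1 : ∫ ω, Real.exp (v * GG shat δ (2^h) h h 1 ω) ∂μ ≤ Real.exp (v^2/2*V) :=
    (key v h hh le_rfl 1 hone).trans (Real.exp_le_exp.2 hCCu)
  have hmgf2 : ∫ ω, Real.exp (v * (-(GG shat δ (2^h) h h 1 ω))) ∂μ
      ≤ Real.exp (v^2/2*V) := by
    have hfun : (fun ω => Real.exp (v * (-(GG shat δ (2^h) h h 1 ω))))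
        = fun ω => Real.exp ((-v) * GG shat δ (2^h) h h 1 ω) := by
      funext ω
      ring_nf
    rw [hfun]
    refine (key (-v) h hh le_rfl 1 hone).trans (Real.exp_le_exp.2 ?_)
    rw [neg_pow]
    simpa using hCCu
  have hYmeas : Measurable[m0] (GG shat δ (2^h) h h 1) :=
    (hG_meas h hh le_rfl 1 hone).mono (hFle _) le_rfl
  have hYb : ∀ᵐ ω ∂μ, |GG shat δ (2^h) h h 1 ω| ≤ DDb x u h h 1 := by
    filter_upwards [hE] with ω hω
    exact hG_bd h hh le_rfl 1 hone ω hω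
  have hY2meas : Measurable[m0] (fun ω => -(GG shat δ (2^h) h h 1 ω)) := hYmeas.neg
  have hY2b : ∀ᵐ ω ∂μ, |(fun ω => -(GG shat δ (2^h) h h 1 ω)) ω| ≤ DDb x u h h 1 := by
    filter_upwards [hYb] with ω hω
    simpa using hω
  have htail1 := tail_bound μ (a := a) hYmeas hYb hvpos hmgf1
  have htail2 := tail_bound μ (a := a) hY2meas hY2b hvpos hmgf2
  have hexpval : Real.exp (-(v*a)) * Real.exp (v^2/2*V) = lam/2 := by
    rw [← Real.exp_add]
    have harg : -(v*a) + v^2/2*V = -L := by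
      have h1 : v * a = 2 * L := by
        rw [hvdef, hVdef, div_mul_eq_mul_div, ← sq, ha2]
        rw [div_eq_iff (div_pos (mul_pos (pow_pos hS_pos 2) hγpos) two_pos).ne']
        ring
      have h2 : v^2/2*V = L := by
        rw [hvdef, div_pow, ha2, hVdef]
        rw [div_div, div_mul_eq_mul_div, div_eq_iff (mul_pos (pow_pos (div_pos (mul_pos (pow_pos hS_pos 2) hγpos) two_pos) 2) two_pos).ne']
        ring
      linarith
    rw [harg, hLdef, Real.exp_neg, Real.exp_log (div_pos two_pos hlam0), inv_div]
  rw [hexpval] at htail1 htail2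
  have hbound_eq : K * Real.sqrt γ * Real.sqrt L = a / |s h 1| := by
    rw [hK, hSicc, hadef]
    field_simp
  set T : Set Ω := {ω | |shat h 1 ω - s h 1| / |s h 1| ≤ K * Real.sqrt γ * Real.sqrt L}
    with hTdef
  have hTmeas : MeasurableSet T := by
    rw [hTdef]
    exact measurableSet_le
      (((((hshat_meas h hh le_rfl 1 le_rfl hone).mono (hFle _) le_rfl).sub
        measurable_const).abs).div_const _) measurable_const
  have hsub : Tᶜ ⊆ {ω | a ≤ GG shat δ (2^h) h h 1 ω}
      ∪ {ω | a ≤ (fun ω => -(GG shat δ (2^h) h h 1 ω)) ω} := by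
    intro ω hω
    simp only [hTdef, Set.mem_compl_iff, Set.mem_setOf_eq, not_le] at hω
    rw [hbound_eq] at hω
    have haW : a < |shat h 1 ω - s h 1| := by
      have h2 := mul_lt_mul_of_pos_right hω hs_pos
      rwa [div_mul_cancel₀ _ hs_pos.ne', div_mul_cancel₀ _ hs_pos.ne'] at h2
    rw [lt_abs] at haW
    cases haW with
    | inl h1 =>
        left
        rw [Set.mem_setOf_eq, htele ω]
        exact h1.le
    | inr h1 =>
        right
        simp only [Set.mem_setOf_eq, htele ω]
        linarith
  have hTc : μ Tᶜ ≤ ENNReal.ofReal lam := by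
    calc μ Tᶜ ≤ μ ({ω | a ≤ GG shat δ (2^h) h h 1 ω}
          ∪ {ω | a ≤ (fun ω => -(GG shat δ (2^h) h h 1 ω)) ω}) := measure_mono hsub
      _ ≤ μ {ω | a ≤ GG shat δ (2^h) h h 1 ω}
          + μ {ω | a ≤ (fun ω => -(GG shat δ (2^h) h h 1 ω)) ω} := measure_union_le _ _
      _ ≤ ENNReal.ofReal (lam/2) + ENNReal.ofReal (lam/2) := add_le_add htail1 htail2
      _ = ENNReal.ofReal lam := by
          rw [← ENNReal.ofReal_add (by linarith) (by linarith)]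
          norm_num
  calc ENNReal.ofReal (1-lam) ≤ 1 - μ Tᶜ := by
        refine ENNReal.le_sub_of_add_le_right (measure_ne_top μ _) ?_
        calc ENNReal.ofReal (1-lam) + μ Tᶜ
            ≤ ENNReal.ofReal (1-lam) + ENNReal.ofReal lam := add_le_add le_rfl hTc
          _ = ENNReal.ofReal 1 := by
              rw [← ENNReal.ofReal_add (by linarith) hlam0.le]
              norm_num
          _ = 1 := ENNReal.ofReal_one
    _ ≤ μ T := by
        rw [tsub_le_iff_right]
        rw [measure_add_measure_compl hTmeas, measure_univ]
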